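/- With V_{ij} = v_i⊗v_j + q^{δ_{ij}+1} v_j⊗v_i for i ≥ j, suppose N ≥ 2, 0 < q < 1, and β : span{V_{ij} : i ≥ j} → K is a linear map such that for all i ≥ j ≥ k the element V_{ijk} (defined via the symmetrizer Sym_3) satisfies (β⊗id − id⊗β)(V_{ijk}) = 0, where β⊗id and id⊗β are evaluated using the two expansions of V_{ijk} in terms of V_{ab}⊗v_c and v_a⊗V_{bc}. Then β = 0. -/

import Mathlib

open TensorProduct LinearMap

noncomputable section

def op1 {K : Type} [Field K] {M : Type} [AddCommGroup M] [Module K M]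
    (f : M ⊗[K] M →ₗ[K] M ⊗[K] M) : M ⊗[K] (M ⊗[K] M) →ₗ[K] M ⊗[K] (M ⊗[K] M) :=
  (TensorProduct.assoc K M M M).toLinearMap ∘ₗ (LinearMap.rTensor M f) ∘ₗ
    (TensorProduct.assoc K M M M).symm.toLinearMap

def op2 {K : Type} [Field K] {M : Type} [AddCommGroup M] [Module K M]
    (f : M ⊗[K] M →ₗ[K] M ⊗[K] M) : M ⊗[K] (M ⊗[K] M) →ₗ[K] M ⊗[K] (M ⊗[K] M) :=
  LinearMap.lTensor M f

/-- The degree-3 symmetrizer `id + σ₁ + σ₂ + σ₁σ₂ + σ₂σ₁ + σ₁σ₂σ₁`. -/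
def Sym3 {K : Type} [Field K] {M : Type} [AddCommGroup M] [Module K M]
    (σ : M ⊗[K] M →ₗ[K] M ⊗[K] M) : M ⊗[K] (M ⊗[K] M) →ₗ[K] M ⊗[K] (M ⊗[K] M) :=
  LinearMap.id + op1 σ + op2 σ + op1 σ ∘ₗ op2 σ + op2 σ ∘ₗ op1 σ +
    op1 σ ∘ₗ op2 σ ∘ₗ op1 σ

variable (N : ℕ) (q : ℝ)

def vb : Module.Basis (Fin N) ℝ (Fin N → ℝ) := Pi.basisFun ℝ (Fin N)

/-- `σ(v_i ⊗ v_j) = q^{δ_{ij}+1} v_j ⊗ v_i + θ(j-i) q(q - q⁻¹) v_i ⊗ v_j`. -/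
def sigma : (Fin N → ℝ) ⊗[ℝ] (Fin N → ℝ) →ₗ[ℝ] (Fin N → ℝ) ⊗[ℝ] (Fin N → ℝ) :=
  ((vb N).tensorProduct (vb N)).constr ℝ fun p =>
    (if p.1 = p.2 then q ^ 2 else q) • (vb N p.2 ⊗ₜ[ℝ] vb N p.1) +
    (if (p.1 : ℕ) < (p.2 : ℕ) then q * (q - q⁻¹) else 0) • (vb N p.1 ⊗ₜ[ℝ] vb N p.2)

/-- `V_{ij} = (id + σ)(v_i ⊗ v_j) = v_i ⊗ v_j + q^{δ_{ij}+1} v_j ⊗ v_i`, intended for `i ≥ j`. -/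
def Vel (i j : Fin N) : (Fin N → ℝ) ⊗[ℝ] (Fin N → ℝ) :=
  vb N i ⊗ₜ[ℝ] vb N j + (if i = j then q ^ 2 else q) • (vb N j ⊗ₜ[ℝ] vb N i)

/-- `V_{ijk} = Sym₃(v_i ⊗ v_j ⊗ v_k)`. -/
def Velijk (i j k : Fin N) : (Fin N → ℝ) ⊗[ℝ] ((Fin N → ℝ) ⊗[ℝ] (Fin N → ℝ)) :=
  Sym3 (sigma N q) (vb N i ⊗ₜ[ℝ] (vb N j ⊗ₜ[ℝ] vb N k))

/-- `β ⊗ id` evaluated on triple tensors. -/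
def betaId (β : (Fin N → ℝ) ⊗[ℝ] (Fin N → ℝ) →ₗ[ℝ] ℝ) :
    (Fin N → ℝ) ⊗[ℝ] ((Fin N → ℝ) ⊗[ℝ] (Fin N → ℝ)) →ₗ[ℝ] (Fin N → ℝ) :=
  (TensorProduct.lid ℝ (Fin N → ℝ)).toLinearMap ∘ₗ LinearMap.rTensor (Fin N → ℝ) β ∘ₗ
    (TensorProduct.assoc ℝ (Fin N → ℝ) (Fin N → ℝ) (Fin N → ℝ)).symm.toLinearMap

/-- `id ⊗ β` evaluated on triple tensors. -/
def idBeta (β : (Fin N → ℝ) ⊗[ℝ] (Fin N → ℝ) →ₗ[ℝ] ℝ) :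
    (Fin N → ℝ) ⊗[ℝ] ((Fin N → ℝ) ⊗[ℝ] (Fin N → ℝ)) →ₗ[ℝ] (Fin N → ℝ) :=
  (TensorProduct.rid ℝ (Fin N → ℝ)).toLinearMap ∘ₗ LinearMap.lTensor (Fin N → ℝ) β

lemma sigma_apply (a b : Fin N) : sigma N q (vb N a ⊗ₜ[ℝ] vb N b) =
    (if a = b then q ^ 2 else q) • (vb N b ⊗ₜ[ℝ] vb N a) +
    (if (a : ℕ) < (b : ℕ) then q * (q - q⁻¹) else 0) • (vb N a ⊗ₜ[ℝ] vb N b) := by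
  have h := Module.Basis.constr_basis ((vb N).tensorProduct (vb N)) ℝ
    (fun p => (if p.1 = p.2 then q ^ 2 else q) • (vb N p.2 ⊗ₜ[ℝ] vb N p.1) +
    (if (p.1 : ℕ) < (p.2 : ℕ) then q * (q - q⁻¹) else 0) • (vb N p.1 ⊗ₜ[ℝ] vb N p.2)) (a, b)
  rw [Module.Basis.tensorProduct_apply] at h
  exact h

variable {M : Type} [AddCommGroup M] [Module ℝ M]

lemma op1_tmul (f : M ⊗[ℝ] M →ₗ[ℝ] M ⊗[ℝ] M) (x y z : M) :
    op1 f (x ⊗ₜ (y ⊗ₜ z)) = (TensorProduct.assoc ℝ M M M) (f (x ⊗ₜ y) ⊗ₜ z) := by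
  simp [op1]

lemma op2_tmul (f : M ⊗[ℝ] M →ₗ[ℝ] M ⊗[ℝ] M) (x y z : M) :
    op2 f (x ⊗ₜ (y ⊗ₜ z)) = x ⊗ₜ f (y ⊗ₜ z) := by
  simp [op2]

lemma betaId_tmul (β : (Fin N → ℝ) ⊗[ℝ] (Fin N → ℝ) →ₗ[ℝ] ℝ) (x y z : Fin N → ℝ) :
    betaId N β (x ⊗ₜ (y ⊗ₜ z)) = β (x ⊗ₜ y) • z := by
  simp [betaId]

lemma idBeta_tmul (β : (Fin N → ℝ) ⊗[ℝ] (Fin N → ℝ) →ₗ[ℝ] ℝ) (x y z : Fin N → ℝ) :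
    idBeta N β (x ⊗ₜ (y ⊗ₜ z)) = β (y ⊗ₜ z) • x := by
  simp [idBeta]

lemma Velijk_iik {i k : Fin N} (h : (k:ℕ) < (i:ℕ)) : Velijk N q i i k =
    (1+q^2) • (vb N i ⊗ₜ[ℝ] (vb N i ⊗ₜ[ℝ] vb N k)) +
    (q+q^3) • (vb N i ⊗ₜ[ℝ] (vb N k ⊗ₜ[ℝ] vb N i)) +
    (q^2+q^4) • (vb N k ⊗ₜ[ℝ] (vb N i ⊗ₜ[ℝ] vb N i)) := by
  have hne : ¬ (i = k) := by
    intro e; rw [e] at h; exact lt_irrefl _ h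
  have hnl : ¬ ((i:ℕ) < (k:ℕ)) := by omega
  simp only [Velijk, Sym3, LinearMap.add_apply, LinearMap.id_apply, LinearMap.comp_apply,
    op1_tmul, op2_tmul, sigma_apply, if_neg hne, if_neg hnl, if_pos rfl,
    lt_self_iff_false, if_false, eq_self_iff_true, if_true,
    zero_smul, add_zero, zero_add, LinearMap.map_add, LinearMap.map_smul, tmul_add, tmul_smul,
    ← smul_tmul', LinearEquiv.map_add, LinearEquiv.map_smul, TensorProduct.assoc_tmul, smul_smul]
  module

lemma Velijk_ikk {i k : Fin N} (h : (k:ℕ) < (i:ℕ)) : Velijk N q i k k =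
    (1+q^2) • (vb N i ⊗ₜ[ℝ] (vb N k ⊗ₜ[ℝ] vb N k)) +
    (q+q^3) • (vb N k ⊗ₜ[ℝ] (vb N i ⊗ₜ[ℝ] vb N k)) +
    (q^2+q^4) • (vb N k ⊗ₜ[ℝ] (vb N k ⊗ₜ[ℝ] vb N i)) := by
  have hne : ¬ (i = k) := by
    intro e; rw [e] at h; exact lt_irrefl _ h
  have hnl : ¬ ((i:ℕ) < (k:ℕ)) := by omega
  simp only [Velijk, Sym3, LinearMap.add_apply, LinearMap.id_apply, LinearMap.comp_apply,
    op1_tmul, op2_tmul, sigma_apply, if_neg hne, if_neg hnl, if_pos rfl,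
    lt_self_iff_false, if_false, eq_self_iff_true, if_true,
    zero_smul, add_zero, zero_add, LinearMap.map_add, LinearMap.map_smul, tmul_add, tmul_smul,
    ← smul_tmul', LinearEquiv.map_add, LinearEquiv.map_smul,
    TensorProduct.assoc_tmul, smul_smul]
  module

lemma vb_apply (a b : Fin N) : vb N a b = if b = a then 1 else 0 := by
  simp [vb, Pi.basisFun_apply, Pi.single_apply]

lemma scalar_iik (β : (Fin N → ℝ) ⊗[ℝ] (Fin N → ℝ) →ₗ[ℝ] ℝ) {i k : Fin N}
    (h : (k:ℕ) < (i:ℕ))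
    (hβ : betaId N β (Velijk N q i i k) = idBeta N β (Velijk N q i i k)) :
    (1+q^2) * β (vb N i ⊗ₜ[ℝ] vb N i) = (q^2+q^4) * β (vb N i ⊗ₜ[ℝ] vb N i) ∧
    (q+q^3) * β (vb N i ⊗ₜ[ℝ] vb N k) + (q^2+q^4) * β (vb N k ⊗ₜ[ℝ] vb N i) =
      (1+q^2) * β (vb N i ⊗ₜ[ℝ] vb N k) + (q+q^3) * β (vb N k ⊗ₜ[ℝ] vb N i) := by
  have hne : ¬ ((k:Fin N) = i) := by intro e; rw [e] at h; exact lt_irrefl _ h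
  have hne' : ¬ ((i:Fin N) = k) := fun e => hne e.symm
  rw [Velijk_iik N q h] at hβ
  simp only [LinearMap.map_add, LinearMap.map_smul, betaId_tmul, idBeta_tmul] at hβ
  constructor
  · have h1 := congrFun hβ k
    simp only [Pi.add_apply, Pi.smul_apply, vb_apply, if_neg hne', if_neg hne, if_pos rfl,
      if_true, smul_eq_mul, mul_one, mul_zero, add_zero, zero_add] at h1
    linarith
  · have h2 := congrFun hβ i
    simp only [Pi.add_apply, Pi.smul_apply, vb_apply, if_neg hne', if_neg hne, if_pos rfl,
      if_true, smul_eq_mul, mul_one, mul_zero, add_zero, zero_add] at h2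
    linarith

lemma scalar_ikk (β : (Fin N → ℝ) ⊗[ℝ] (Fin N → ℝ) →ₗ[ℝ] ℝ) {i k : Fin N}
    (h : (k:ℕ) < (i:ℕ))
    (hβ : betaId N β (Velijk N q i k k) = idBeta N β (Velijk N q i k k)) :
    (q^2+q^4) * β (vb N k ⊗ₜ[ℝ] vb N k) = (1+q^2) * β (vb N k ⊗ₜ[ℝ] vb N k) := by
  have hne : ¬ ((k:Fin N) = i) := by intro e; rw [e] at h; exact lt_irrefl _ h
  have hne' : ¬ ((i:Fin N) = k) := fun e => hne e.symm
  rw [Velijk_ikk N q h] at hβ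
  simp only [LinearMap.map_add, LinearMap.map_smul, betaId_tmul, idBeta_tmul] at hβ
  have h1 := congrFun hβ i
  simp only [Pi.add_apply, Pi.smul_apply, vb_apply, if_neg hne', if_neg hne, if_pos rfl,
    if_true, smul_eq_mul, mul_one, mul_zero, add_zero, zero_add] at h1
  linarith


/-- There are no nontrivial quadratic-constant PBW-deformations of `Λ_q(V)`:
if `(β ⊗ id - id ⊗ β)(V_{ijk}) = 0` for all `i ≥ j ≥ k`, then `β` vanishes on all `V_{ij}`. -/
theorem no_pbw_deformation_simple (hN : 2 ≤ N) (hq0 : 0 < q) (hq1 : q < 1)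
    (β : (Fin N → ℝ) ⊗[ℝ] (Fin N → ℝ) →ₗ[ℝ] ℝ)
    (hβ : ∀ i j k : Fin N, k ≤ j → j ≤ i →
      betaId N β (Velijk N q i j k) = idBeta N β (Velijk N q i j k)) :
    ∀ i j : Fin N, j ≤ i → β (Vel N q i j) = 0 := by
  have hq2a : q^2 < 1 := by nlinarith
  have hq2 : (0:ℝ) < (1+q^2)*(1-q^2) := mul_pos (by positivity) (by linarith)
  have hq2' : ((1:ℝ)+q^2)*(1-q^2) ≠ 0 := ne_of_gt hq2
  have hq3 : ((q:ℝ)-1)*(1+q^2) ≠ 0 := by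
    intro h; rcases mul_eq_zero.1 h with h|h <;> nlinarith
  have hdiag : ∀ a : Fin N, β (vb N a ⊗ₜ[ℝ] vb N a) = 0 := by
    intro a
    by_cases ha : (a:ℕ) = 0
    · have hi1 : 1 < N := by omega
      set i : Fin N := ⟨1, hi1⟩ with hidef
      have h : (a:ℕ) < (i:ℕ) := by simp [hidef, ha]
      have e := hβ i a a (le_refl a) (by rw [Fin.le_def]; omega)
      have hs := scalar_ikk N q β h e
      have h0 : ((1:ℝ)+q^2)*(1-q^2) * β (vb N a ⊗ₜ[ℝ] vb N a) = 0 := by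
        linear_combination -hs
      rcases mul_eq_zero.1 h0 with h'|h'
      · exact absurd h' hq2'
      · exact h'
    · have h0N : 0 < N := by omega
      set k : Fin N := ⟨0, h0N⟩ with hkdef
      have h : (k:ℕ) < (a:ℕ) := by simp [hkdef]; omega
      have e := hβ a a k (by rw [Fin.le_def]; omega) (le_refl a)
      have hs := (scalar_iik N q β h e).1
      have h0 : ((1:ℝ)+q^2)*(1-q^2) * β (vb N a ⊗ₜ[ℝ] vb N a) = 0 := by
        linear_combination hs
      rcases mul_eq_zero.1 h0 with h'|h'
      · exact absurd h' hq2'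
      · exact h'
  intro i j hji
  rcases eq_or_lt_of_le hji with heq|hlt
  · rw [Vel, ← heq, if_pos rfl]
    rw [map_add, map_smul, hdiag j, smul_eq_mul, mul_zero, add_zero]
  · have h : (j:ℕ) < (i:ℕ) := by rw [Fin.lt_def] at hlt; exact hlt
    have hne : ¬ (i = j) := by intro e; rw [e] at h; exact lt_irrefl _ h
    have e := hβ i i j (le_of_lt hlt) (le_refl i)
    have hs := (scalar_iik N q β h e).2
    have h0 : ((q:ℝ)-1)*(1+q^2) * (β (vb N i ⊗ₜ[ℝ] vb N j) + q * β (vb N j ⊗ₜ[ℝ] vb N i)) = 0 := by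
      linear_combination hs
    rcases mul_eq_zero.1 h0 with h'|h'
    · exact absurd h' hq3
    · rw [Vel, if_neg hne, map_add, map_smul, smul_eq_mul]
      linarith

end
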